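/- Let C be the 2×5 matrix ((1, 0, C₁₃, C₁₄, −T₁), (0, 1, C₂₃, C₂₄, −T₂)) with C₁₃ = k₅(1/k₂ + 1/k₃), C₁₄ = (k₄k₅/k₃)(1/k₁ + 1/k₂), C₂₃ = k₅/k₆, C₂₄ = k₄k₅/(k₃k₆), where all k_i, T_i > 0. Then the 2×3 submatrix of C with columns {1, 3, 5} is positively spanning if and only if T₁k₂k₃ − T₂k₂k₆ − T₂k₃k₆ > 0. -/

import Mathlib

/-- The `i`-th maximal minor of a `2 × 3` real matrix: the determinant of the
`2 × 2` matrix obtained by deleting the `i`-th column. -/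
noncomputable def minor23 (M : Matrix (Fin 2) (Fin 3) ℝ) (i : Fin 3) : ℝ :=
  (M.submatrix id i.succAbove).det

/-- A `2 × 3` matrix is positively spanning if its signed maximal minors
`(-1)^i * minor23 M i` are all nonzero and of the same sign. -/
def PositivelySpanning23 (M : Matrix (Fin 2) (Fin 3) ℝ) : Prop :=
  (∀ i : Fin 3, 0 < (-1 : ℝ) ^ (i : ℕ) * minor23 M i) ∨
  (∀ i : Fin 3, (-1 : ℝ) ^ (i : ℕ) * minor23 M i < 0)

theorem hhk_simplex1_positively_decorated_iff
    (k₁ k₂ k₃ k₄ k₅ k₆ T₁ T₂ : ℝ)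
    (hk₁ : 0 < k₁) (hk₂ : 0 < k₂) (hk₃ : 0 < k₃)
    (hk₄ : 0 < k₄) (hk₅ : 0 < k₅) (hk₆ : 0 < k₆)
    (hT₁ : 0 < T₁) (hT₂ : 0 < T₂) :
    PositivelySpanning23
      !![1, k₅ * (1 / k₂ + 1 / k₃), -T₁;
         0, k₅ / k₆, -T₂] ↔
      T₁ * k₂ * k₃ - T₂ * k₂ * k₆ - T₂ * k₃ * k₆ > 0 := by
  have hpos : 0 < k₅ / (k₂ * k₃ * k₆) := by positivity
  have key : T₁ * (k₅ / k₆) - k₅ * (k₂⁻¹ + k₃⁻¹) * T₂ =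
      k₅ / (k₂ * k₃ * k₆) * (T₁ * k₂ * k₃ - T₂ * k₂ * k₆ - T₂ * k₃ * k₆) := by
    field_simp
    ring
  constructor
  · rintro (h | h)
    · have h0 := h 0
      simp only [minor23, Fin.isValue, Fin.val_zero, pow_zero, one_mul,
        Matrix.det_fin_two, Matrix.submatrix_apply, id] at h0
      norm_num [Fin.succAbove, Matrix.cons_val_zero, Matrix.cons_val_one, Matrix.cons_val_two] at h0
      have h0' := sub_pos.mpr h0
      rw [key] at h0'
      exact (mul_pos_iff.mp h0').elim (fun hh => hh.2)
        (fun hh => absurd hpos (not_lt.mpr hh.1.le))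
    · have h1 := h 1
      exfalso
      simp only [minor23, Fin.isValue, Fin.val_one, pow_one,
        Matrix.det_fin_two, Matrix.submatrix_apply, id] at h1
      norm_num [Fin.succAbove, Matrix.cons_val_zero, Matrix.cons_val_one, Matrix.cons_val_two] at h1
      nlinarith
  · intro h
    left
    intro i
    fin_cases i <;>
      simp only [minor23, Fin.isValue, Fin.val_zero, Fin.val_one, Fin.val_two,
        pow_zero, pow_one, pow_succ, one_mul, Matrix.det_fin_two,
        Matrix.submatrix_apply, id] <;>
      norm_num [Fin.succAbove, Matrix.cons_val_zero, Matrix.cons_val_one, Matrix.cons_val_two]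
    · rw [← sub_pos, key]; positivity
    · exact hT₂
    · norm_num [Fin.lt_def]; positivity
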